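/- arXiv:math/0702750 — 2 statements merged into one kernel-verified Lean document; each statement's English description precedes it below -/
import Mathlib

section
/- For λ in the Garding cone Γ_m, all the lower-order elementary symmetric polynomials are positive: S_j(λ) > 0 for every j with 1 ≤ j ≤ m. -/
/-- The `m`-th elementary symmetric polynomial of `l : Fin n → ℝ`. -/
noncomputable def esymm (n m : ℕ) (l : Fin n → ℝ) : ℝ :=
  ∑ s ∈ Finset.univ.powersetCard m, ∏ i ∈ s, l i

/-- The Garding cone `Γ_m`: the connected component of `{λ | S_m(λ) > 0}`
containing the positive cone (equivalently, containing the all-ones vector). -/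
noncomputable def GardingCone (n m : ℕ) : Set (Fin n → ℝ) :=
  connectedComponentIn {l | 0 < esymm n m l} (fun _ => 1)

open Polynomial in
lemma aux_esymm_zero (n : ℕ) (l : Fin n → ℝ) : esymm n 0 l = 1 := by
  simp [esymm]

lemma aux_descFactorial_pos {n k : ℕ} (h : k ≤ n) : 0 < n.descFactorial k :=
  Nat.pos_of_ne_zero fun h0 => absurd (Nat.descFactorial_eq_zero_iff_lt.mp h0) (by omega)

lemma aux_msum_pos (s : Multiset ℝ) (hs : s ≠ 0) (h : ∀ a ∈ s, 0 < a) : 0 < s.sum := by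
  obtain ⟨x, hx⟩ := Multiset.exists_mem_of_ne_zero hs
  calc (0:ℝ) < x := h x hx
    _ ≤ s.sum := Multiset.single_le_sum (fun y hy => (h y hy).le) x hx

lemma aux_esymm_multiset_pos (s : Multiset ℝ) (h : ∀ a ∈ s, 0 < a) (k : ℕ)
    (hk : k ≤ Multiset.card s) : 0 < s.esymm k := by
  rw [Multiset.esymm]
  apply aux_msum_pos
  · intro h0
    have := Multiset.card_powersetCard k s
    rw [show Multiset.powersetCard k s = 0 from Multiset.map_eq_zero.mp h0] at this
    simp only [Multiset.card_zero] at this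
    exact absurd this.symm (Nat.choose_pos hk).ne'
  · intro a ha
    obtain ⟨t, ht, rfl⟩ := Multiset.mem_map.mp ha
    have hts := (Multiset.mem_powersetCard.mp ht).1
    exact Multiset.prod_pos fun b hb => h b (Multiset.mem_of_le hts hb)

open Polynomial in
/-- Key algebraic lemma: if all `S_j ≥ 0` for `1 ≤ j ≤ m` and `S_m > 0`, then all
`S_j > 0` for `1 ≤ j ≤ m`. -/
lemma aux_key (n m : ℕ) (hm : 1 ≤ m) (hmn : m ≤ n) (l : Fin n → ℝ)
    (hpos : 0 < esymm n m l) (hnn : ∀ j, 1 ≤ j → j ≤ m → 0 ≤ esymm n j l) :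
    ∀ j, 1 ≤ j → j ≤ m → 0 < esymm n j l := by
  set Q : ℝ[X] := ∏ i : Fin n, (X + C (l i)) with hQ
  -- coefficients of Q
  have hQcoeff : ∀ k, k ≤ n → Q.coeff k = esymm n (n - k) l := by
    intro k hk
    rw [hQ, Finset.prod_X_add_C_coeff Finset.univ l (by simpa using hk)]
    simp [esymm]
  -- roots of Q
  have hQroots : Q.roots = Finset.univ.val.map (fun i : Fin n => -l i) := by
    have : Q = ((Finset.univ.val.map (fun i : Fin n => -l i)).map
        (fun a : ℝ => X - C a)).prod := by
      rw [hQ, Finset.prod_eq_multiset_prod, Multiset.map_map]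
      congr 1
      apply Multiset.map_congr rfl
      intro i _
      simp [sub_neg_eq_add]
    rw [this, Polynomial.roots_multiset_prod_X_sub_C]
  have hQroots_card : Multiset.card Q.roots = n := by
    rw [hQroots, Multiset.card_map]; simp
  set P : ℝ[X] := derivative^[n - m] Q with hP
  -- coefficients of P
  have hPcoeff : ∀ d, d ≤ m →
      P.coeff d = ((d + (n - m)).descFactorial (n - m) : ℝ) * esymm n (m - d) l := by
    intro d hd
    rw [hP, Polynomial.coeff_iterate_derivative, hQcoeff (d + (n - m)) (by omega),
      nsmul_eq_mul]
    congr 2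
    omega
  have hlead : P.coeff m = (n.descFactorial (n - m) : ℝ) := by
    rw [hPcoeff m le_rfl, Nat.sub_self, aux_esymm_zero, mul_one]
    congr 2
    omega
  have hlead_pos : 0 < P.coeff m := by
    rw [hlead]
    exact_mod_cast aux_descFactorial_pos (Nat.sub_le n m)
  have hPdeg : P.natDegree = m := by
    have h1 : P.natDegree ≤ m := by
      have := Polynomial.natDegree_iterate_derivative Q (n - m)
      have hQdeg : Q.natDegree = n := by
        rw [hQ, Polynomial.natDegree_prod]
        · simp [Polynomial.natDegree_X_add_C]
        · intro i _
          exact Polynomial.X_add_C_ne_zero (l i)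
      rw [hQdeg] at this
      rw [hP]; omega
    have h2 : m ≤ P.natDegree := Polynomial.le_natDegree_of_ne_zero hlead_pos.ne'
    omega
  have hP0 : P ≠ 0 := fun h => by simp [h] at hlead_pos
  -- number of roots of P
  have hroots_ge : ∀ k : ℕ, (n : ℤ) - k ≤ Multiset.card ((derivative^[k] Q).roots) := by
    intro k
    induction k with
    | zero => simp [hQroots_card]
    | succ k ih =>
      have h2 := Polynomial.card_roots_le_derivative (derivative^[k] Q)
      rw [Function.iterate_succ_apply' derivative]
      push_cast at ih ⊢
      omega
  have hProots_card : Multiset.card P.roots = m := by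
    have h1 := Polynomial.card_roots' P
    have h2 := hroots_ge (n - m)
    rw [← hP] at h2
    rw [hPdeg] at h1
    omega
  have hsplits : P.Splits := by
    rw [Polynomial.splits_iff_card_roots, hProots_card, hPdeg]
  -- all coefficients of P in range are nonneg, coeff 0 positive
  have hcoeff_nn : ∀ d, d ≤ m → 0 ≤ P.coeff d := by
    intro d hd
    rw [hPcoeff d hd]
    apply mul_nonneg (by positivity)
    rcases Nat.eq_zero_or_pos (m - d) with h | h
    · rw [h, aux_esymm_zero]; norm_num
    · exact hnn (m - d) h (by omega)
  have hcoeff0_pos : 0 < P.coeff 0 := by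
    rw [hPcoeff 0 (by omega), Nat.sub_zero]
    apply mul_pos _ hpos
    exact_mod_cast aux_descFactorial_pos (by omega)
  -- all roots of P are negative
  have hroots_neg : ∀ r ∈ P.roots, r < 0 := by
    intro r hr
    by_contra hcon
    push_neg at hcon
    have heval : P.eval r = 0 := (Polynomial.mem_roots hP0).mp hr
    have : 0 < P.eval r := by
      rw [Polynomial.eval_eq_sum_range, hPdeg, Finset.sum_range_succ']
      apply add_pos_of_nonneg_of_pos
      · apply Finset.sum_nonneg
        intro i hi
        apply mul_nonneg (hcoeff_nn _ (by simp at hi; omega))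
        positivity
      · simpa using hcoeff0_pos
    linarith
  -- factorization of P and positivity of coefficients
  intro j hj1 hj2
  have hkey : 0 < P.coeff (m - j) := by
    have hfac := Polynomial.Splits.eq_prod_roots hsplits
    have hlc : P.leadingCoeff = P.coeff m := by rw [Polynomial.leadingCoeff, hPdeg]
    have hmap : (P.roots.map fun a => X - C a) = ((P.roots.map fun a => -a).map
        fun a : ℝ => X + C a) := by
      rw [Multiset.map_map]
      apply Multiset.map_congr rfl
      intro a _
      simp [sub_eq_add_neg]
    have hcoeff_prod : ((P.roots.map fun a => X - C a).prod).coeff (m - j)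
        = (P.roots.map fun a => -a).esymm j := by
      rw [hmap, Multiset.prod_X_add_C_coeff _ (by rw [Multiset.card_map, hProots_card]; omega)]
      rw [Multiset.card_map, hProots_card]
      congr 1
      omega
    have : P.coeff (m - j) = P.coeff m * (P.roots.map fun a => -a).esymm j := by
      conv_lhs => rw [hfac]
      rw [Polynomial.coeff_C_mul, hcoeff_prod, hlc]
    rw [this]
    apply mul_pos hlead_pos
    apply aux_esymm_multiset_pos
    · intro a ha
      obtain ⟨b, hb, rfl⟩ := Multiset.mem_map.mp ha
      linarith [hroots_neg b hb]
    · rw [Multiset.card_map, hProots_card]; omega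
  rw [hPcoeff (m - j) (by omega)] at hkey
  rw [show m - (m - j) = j by omega] at hkey
  have hc : (0:ℝ) < ((m - j + (n - m)).descFactorial (n - m) : ℝ) := by
    exact_mod_cast aux_descFactorial_pos (by omega)
  nlinarith [hkey, hc]

theorem stmt2 (n m : ℕ) (hm : 1 ≤ m) (hmn : m ≤ n)
    (l : Fin n → ℝ) (hl : l ∈ GardingCone n m) :
    ∀ j : ℕ, 1 ≤ j → j ≤ m → 0 < esymm n j l := by
  have hcont : ∀ j : ℕ, Continuous (esymm n j) := by
    intro j
    unfold esymm
    exact continuous_finset_sum _ fun s _ => continuous_finset_prod _ fun i _ =>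
      continuous_apply i
  have hone : ∀ j : ℕ, j ≤ n → esymm n j (fun _ => 1) = (n.choose j : ℝ) := by
    intro j hj
    simp [esymm, Finset.card_powersetCard]
  set U : Set (Fin n → ℝ) := {l | 0 < esymm n m l} with hU
  have h1U : (fun _ : Fin n => (1:ℝ)) ∈ U := by
    rw [hU, Set.mem_setOf_eq, hone m hmn]
    exact_mod_cast Nat.choose_pos hmn
  set A : Set (Fin n → ℝ) := ⋂ j ∈ Finset.Icc 1 m, {l | 0 < esymm n j l} with hA
  have hmemA : ∀ x, x ∈ A ↔ ∀ j, 1 ≤ j → j ≤ m → 0 < esymm n j x := by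
    intro x
    simp only [hA, Set.mem_iInter, Finset.mem_Icc, Set.mem_setOf_eq]
    constructor
    · intro h j h1 h2; exact h j ⟨h1, h2⟩
    · intro h j hj; exact h j hj.1 hj.2
  have hAopen : IsOpen A := by
    rw [hA]
    exact isOpen_biInter_finset fun j _ => isOpen_lt continuous_const (hcont j)
  have h1A : (fun _ : Fin n => (1:ℝ)) ∈ A := by
    rw [hmemA]
    intro j h1 h2
    rw [hone j (le_trans h2 hmn)]
    exact_mod_cast Nat.choose_pos (le_trans h2 hmn)
  -- the Garding cone is contained in A ∪ (closure A)ᶜ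
  have hclosure : ∀ x ∈ GardingCone n m, x ∈ closure A → x ∈ A := by
    intro x hx hxc
    have hxU : x ∈ U := connectedComponentIn_subset U _ hx
    have hnn : ∀ j, 1 ≤ j → j ≤ m → 0 ≤ esymm n j x := by
      intro j h1 h2
      have hsub : A ⊆ {l | 0 ≤ esymm n j l} := by
        intro y hy
        exact ((hmemA y).mp hy j h1 h2).le
      have hcl : IsClosed {l : Fin n → ℝ | 0 ≤ esymm n j l} :=
        isClosed_le continuous_const (hcont j)
      exact closure_minimal hsub hcl hxc
    exact (hmemA x).mpr (aux_key n m hm hmn x hxU hnn)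
  have hΓconn : IsPreconnected (GardingCone n m) :=
    (isConnected_connectedComponentIn_iff.mpr h1U).isPreconnected
  have hcover : GardingCone n m ⊆ A ∪ (closure A)ᶜ := by
    intro x hx
    by_cases h : x ∈ closure A
    · exact Or.inl (hclosure x hx h)
    · exact Or.inr h
  have hdisj : Disjoint A (closure A)ᶜ :=
    Set.disjoint_compl_right_iff_subset.mpr subset_closure
  rcases hΓconn.subset_or_subset hAopen (isClosed_closure.isOpen_compl) hdisj hcover with
    h | h
  · exact (hmemA l).mp (h hl)
  · exfalso
    have h1Γ : (fun _ : Fin n => (1:ℝ)) ∈ GardingCone n m :=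
      mem_connectedComponentIn h1U
    exact (h h1Γ) (subset_closure h1A)
end

section
/- For λ in the Garding cone Γ_m, the partial derivative ∂S_m/∂λ_i is strictly positive for every i = 1,...,n. -/
open Finset

/-- The elementary symmetric polynomial of the variables indexed by `A`. -/
noncomputable def esymmOn (n : ℕ) (l : Fin n → ℝ) (k : ℕ) (A : Finset (Fin n)) : ℝ :=
  ∑ s ∈ A.powersetCard k, ∏ i ∈ s, l i

lemma esymmOn_zero (n : ℕ) (l : Fin n → ℝ) (A : Finset (Fin n)) : esymmOn n l 0 A = 1 := by
  simp [esymmOn]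

lemma esymmOn_continuous (n k : ℕ) (A : Finset (Fin n)) :
    Continuous fun l => esymmOn n l k A := by
  apply continuous_finset_sum
  intro s _
  exact continuous_finset_prod _ (fun i _ => continuous_apply i)

lemma esymmOn_one (n k : ℕ) (A : Finset (Fin n)) :
    esymmOn n (fun _ => 1) k A = (A.card.choose k : ℝ) := by
  simp [esymmOn, Finset.card_powersetCard]

/-- Splitting a sum over `(k+1)`-subsets of `A` by whether they contain `i ∈ A`. -/
lemma sum_powersetCard_split (n : ℕ) (A : Finset (Fin n)) {i : Fin n} (hi : i ∈ A) (k : ℕ)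
    (f : Finset (Fin n) → ℝ) :
    ∑ s ∈ A.powersetCard (k+1), f s =
      ∑ s ∈ (A.erase i).powersetCard (k+1), f s
        + ∑ s ∈ (A.erase i).powersetCard k, f (insert i s) := by
  conv_lhs => rw [← Finset.insert_erase hi]
  rw [Finset.powersetCard_succ_insert (Finset.notMem_erase i A)]
  rw [Finset.sum_union, Finset.sum_image]
  · intro s hs t ht h
    rw [Finset.mem_coe, Finset.mem_powersetCard] at hs ht
    have his : i ∉ s := fun h' => Finset.notMem_erase i A (hs.1 h')
    have hit : i ∉ t := fun h' => Finset.notMem_erase i A (ht.1 h')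
    rwa [Finset.insert_erase_invOn.2.injOn.eq_iff his hit] at h
  · rw [Finset.disjoint_left]
    intro s hs hs'
    rw [Finset.mem_powersetCard] at hs
    rcases Finset.mem_image.mp hs' with ⟨t, ht, rfl⟩
    exact Finset.notMem_erase i A (hs.1 (Finset.mem_insert_self i t))

/-- Splitting off the variable `i`. -/
lemma esymmOn_succ (n : ℕ) (l : Fin n → ℝ) (k : ℕ) {A : Finset (Fin n)} {i : Fin n}
    (hi : i ∈ A) :
    esymmOn n l (k+1) A
      = esymmOn n l (k+1) (A.erase i) + l i * esymmOn n l k (A.erase i) := by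
  rw [esymmOn, sum_powersetCard_split n A hi k, esymmOn, esymmOn, Finset.mul_sum]
  congr 1
  apply Finset.sum_congr rfl
  intro s hs
  rw [Finset.mem_powersetCard] at hs
  have his : i ∉ s := fun h' => Finset.notMem_erase i A (hs.1 h')
  rw [Finset.prod_insert his]

/-- The double-counting identity `(k+1)·e_{k+1}(A) = ∑_{j∈A} l j · e_k(A \ {j})`. -/
lemma esymmOn_deriv_sum (n : ℕ) (l : Fin n → ℝ) (k : ℕ) (A : Finset (Fin n)) :
    ((k:ℝ)+1) * esymmOn n l (k+1) A
      = ∑ j ∈ A, l j * esymmOn n l k (A.erase j) := by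
  have lhs : ((k:ℝ)+1) * esymmOn n l (k+1) A
      = ∑ t ∈ A.powersetCard (k+1), ∑ j ∈ t, l j * ∏ i ∈ t.erase j, l i := by
    rw [esymmOn, Finset.mul_sum]
    apply Finset.sum_congr rfl
    intro t ht
    rw [Finset.mem_powersetCard] at ht
    have : ∀ j ∈ t, l j * ∏ i ∈ t.erase j, l i = ∏ i ∈ t, l i := by
      intro j hj
      exact Finset.mul_prod_erase t l hj
    rw [Finset.sum_congr rfl this, Finset.sum_const, ht.2, nsmul_eq_mul]
    push_cast
    ring
  rw [lhs]
  rw [Finset.sum_sigma']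
  have rhs : ∑ j ∈ A, l j * esymmOn n l k (A.erase j)
      = ∑ p ∈ A.sigma (fun j => (A.erase j).powersetCard k), l p.1 * ∏ i ∈ p.2, l i := by
    rw [Finset.sum_sigma]
    apply Finset.sum_congr rfl
    intro j _
    rw [esymmOn, Finset.mul_sum]
  rw [rhs]
  apply Finset.sum_nbij' (i := fun p => ⟨p.2, p.1.erase p.2⟩)
    (j := fun p => ⟨insert p.1 p.2, p.1⟩)
  · intro p hp
    rcases Finset.mem_sigma.mp hp with ⟨h1, h2⟩
    rw [Finset.mem_powersetCard] at h1
    refine Finset.mem_sigma.mpr ⟨h1.1 h2, Finset.mem_powersetCard.mpr ⟨?_, ?_⟩⟩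
    · intro x hx
      rw [Finset.mem_erase] at hx ⊢
      exact ⟨hx.1, h1.1 hx.2⟩
    · rw [Finset.card_erase_of_mem h2, h1.2]
      omega
  · intro p hp
    rcases Finset.mem_sigma.mp hp with ⟨h1, h2⟩
    rw [Finset.mem_powersetCard] at h2
    have hni : p.1 ∉ p.2 := fun h => Finset.notMem_erase p.1 A (h2.1 h)
    refine Finset.mem_sigma.mpr ⟨Finset.mem_powersetCard.mpr ⟨?_, ?_⟩, Finset.mem_insert_self _ _⟩
    · intro x hx
      rcases Finset.mem_insert.mp hx with rfl | hx
      · exact h1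
      · exact Finset.mem_of_mem_erase (h2.1 hx)
    · rw [Finset.card_insert_of_notMem hni, h2.2]
  · intro p hp
    rcases Finset.mem_sigma.mp hp with ⟨_, h2⟩
    obtain ⟨t, j⟩ := p
    simp only at h2 ⊢
    simp [Finset.insert_erase h2]
  · intro p hp
    rcases Finset.mem_sigma.mp hp with ⟨h1, h2⟩
    rw [Finset.mem_powersetCard] at h2
    have hni : p.1 ∉ p.2 := fun h => Finset.notMem_erase p.1 A (h2.1 h)
    obtain ⟨j, s⟩ := p
    simp only at hni ⊢
    simp [Finset.erase_insert hni]
  · intro p hp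
    rfl

/-- Core lemma: if `e_m > 0` on the whole index set and all the relevant partial
elementary symmetric polynomials are nonnegative, then they are in fact positive. -/
lemma core (n m : ℕ) (hm : 1 ≤ m) (hmn : m ≤ n) (l : Fin n → ℝ)
    (h0 : 0 < esymmOn n l m univ)
    (h1 : ∀ k ≤ m, ∀ A : Finset (Fin n), A.card = n - m + k → 0 ≤ esymmOn n l k A) :
    ∀ k ≤ m, ∀ A : Finset (Fin n), A.card = n - m + k → 0 < esymmOn n l k A := by
  suffices H : ∀ j, ∀ k ≤ m, m - k = j → ∀ A : Finset (Fin n), A.card = n - m + k →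
      0 < esymmOn n l k A by
    intro k hk A hA
    exact H (m - k) k hk rfl A hA
  intro j
  induction j with
  | zero =>
    intro k hk hj A hA
    have hkm : k = m := by omega
    subst hkm
    have : A = univ := by
      apply Finset.eq_univ_of_card
      rw [hA, Fintype.card_fin]
      omega
    rwa [this]
  | succ j ih =>
    intro k hk hj A hA
    have hklt : k < m := by omega
    rcases (h1 k hk A hA).lt_or_eq with h | h
    · exact h
    exfalso
    rcases Nat.eq_zero_or_pos k with rfl | hk1
    · rw [esymmOn_zero] at h; exact one_ne_zero h.symm
    obtain ⟨k', rfl⟩ : ∃ k', k = k' + 1 := ⟨k - 1, by omega⟩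
    have hAne : A ≠ univ := by
      intro hA'
      rw [hA', Finset.card_univ, Fintype.card_fin] at hA
      omega
    obtain ⟨i, hi⟩ : ∃ i, i ∉ A := by
      by_contra hcon
      push_neg at hcon
      exact hAne (Finset.eq_univ_iff_forall.mpr hcon)
    have hins : (insert i A).card = n - m + (k' + 1 + 1) := by
      rw [Finset.card_insert_of_notMem hi, hA]
      omega
    have hpos : 0 < esymmOn n l (k' + 1 + 1) (insert i A) :=
      ih (k' + 1 + 1) (by omega) (by omega) _ hins
    have herase : (insert i A).erase i = A := Finset.erase_insert hi
    have hsplit := esymmOn_succ n l (k' + 1) (Finset.mem_insert_self i A)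
    rw [herase, ← h, mul_zero, add_zero] at hsplit
    rw [hsplit] at hpos
    have hid := esymmOn_deriv_sum n l (k' + 1) A
    have hterm : ∀ j ∈ A, l j * esymmOn n l (k' + 1) (A.erase j)
        = - (l j ^ 2 * esymmOn n l k' (A.erase j)) := by
      intro j hj
      have := esymmOn_succ n l k' hj
      rw [← h] at this
      have : esymmOn n l (k' + 1) (A.erase j) = - (l j * esymmOn n l k' (A.erase j)) := by
        linarith
      rw [this]; ring
    rw [Finset.sum_congr rfl hterm] at hid
    have hle : ∑ j ∈ A, -(l j ^ 2 * esymmOn n l k' (A.erase j)) ≤ 0 := by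
      apply Finset.sum_nonpos
      intro j hj
      have hcard : (A.erase j).card = n - m + k' := by
        rw [Finset.card_erase_of_mem hj, hA]; omega
      have := h1 k' (by omega) (A.erase j) hcard
      nlinarith [sq_nonneg (l j)]
    rw [← hid] at hle
    have hcoef : (0:ℝ) < ((k' + 1 : ℕ) : ℝ) + 1 := by positivity
    nlinarith

/-- The fderiv of `esymm` in the direction `Pi.single i 1`. -/
lemma fderiv_esymm (n m : ℕ) (hm : 1 ≤ m) (l : Fin n → ℝ) (i : Fin n) :
    fderiv ℝ (esymm n m) l (Pi.single i 1)
      = esymmOn n l (m - 1) (univ.erase i) := by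
  obtain ⟨m', rfl⟩ : ∃ m', m = m' + 1 := ⟨m - 1, by omega⟩
  have hD : HasFDerivAt (esymm n (m' + 1))
      (∑ s ∈ (univ : Finset (Fin n)).powersetCard (m' + 1),
        ∑ j ∈ s, (∏ i' ∈ s.erase j, l i') • (ContinuousLinearMap.proj j :
          (Fin n → ℝ) →L[ℝ] ℝ)) l := by
    apply HasFDerivAt.fun_sum
    intro s _
    exact HasFDerivAt.finset_prod (fun j _ => hasFDerivAt_apply j l)
  rw [hD.fderiv]
  rw [ContinuousLinearMap.sum_apply]
  have step1 : ∀ s ∈ (univ : Finset (Fin n)).powersetCard (m' + 1),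
      ((∑ j ∈ s, (∏ i' ∈ s.erase j, l i') • (ContinuousLinearMap.proj j :
        (Fin n → ℝ) →L[ℝ] ℝ)) (Pi.single i 1))
      = if i ∈ s then ∏ i' ∈ s.erase i, l i' else 0 := by
    intro s _
    rw [ContinuousLinearMap.sum_apply]
    have : ∀ j ∈ s, ((∏ i' ∈ s.erase j, l i') • (ContinuousLinearMap.proj j :
        (Fin n → ℝ) →L[ℝ] ℝ)) (Pi.single i 1)
        = if j = i then ∏ i' ∈ s.erase j, l i' else 0 := by
      intro j _
      rw [ContinuousLinearMap.smul_apply, ContinuousLinearMap.proj_apply,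
        Pi.single_apply]
      by_cases h : j = i <;> simp [h]
    rw [Finset.sum_congr rfl this, Finset.sum_ite_eq' s i (fun j => ∏ i' ∈ s.erase j, l i')]
  rw [Finset.sum_congr rfl step1]
  rw [sum_powersetCard_split n univ (Finset.mem_univ i) m'
    (fun s => if i ∈ s then ∏ i' ∈ s.erase i, l i' else 0)]
  have z1 : ∑ s ∈ (univ.erase i).powersetCard (m' + 1),
      (if i ∈ s then ∏ i' ∈ s.erase i, l i' else 0) = 0 := by
    apply Finset.sum_eq_zero
    intro s hs
    rw [Finset.mem_powersetCard] at hs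
    have : i ∉ s := fun h => Finset.notMem_erase i univ (hs.1 h)
    simp [this]
  rw [z1, zero_add, esymmOn]
  apply Finset.sum_congr rfl
  intro s hs
  rw [Finset.mem_powersetCard] at hs
  have his : i ∉ s := fun h => Finset.notMem_erase i univ (hs.1 h)
  simp [Finset.mem_insert_self, Finset.erase_insert his]

/-- The "good set": all partial elementary symmetric polynomials of the relevant
cardinalities are positive. -/
def Rset (n m : ℕ) : Set (Fin n → ℝ) :=
  ⋂ (k : Fin (m+1)) (A : Finset (Fin n)),
    {l | A.card = n - m + (k:ℕ) → 0 < esymmOn n l k A}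

lemma mem_Rset {n m : ℕ} {l : Fin n → ℝ} :
    l ∈ Rset n m ↔ ∀ k ≤ m, ∀ A : Finset (Fin n), A.card = n - m + k →
      0 < esymmOn n l k A := by
  simp only [Rset, Set.mem_iInter, Set.mem_setOf_eq]
  constructor
  · intro h k hk A hA
    exact h ⟨k, by omega⟩ A hA
  · intro h k A hA
    exact h k (by omega) A hA

lemma isOpen_Rset (n m : ℕ) : IsOpen (Rset n m) := by
  apply isOpen_iInter_of_finite
  intro k
  apply isOpen_iInter_of_finite
  intro A
  by_cases hc : A.card = n - m + (k:ℕ)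
  · have : {l : Fin n → ℝ | A.card = n - m + (k:ℕ) → 0 < esymmOn n l k A}
        = {l | 0 < esymmOn n l (k:ℕ) A} := by
      ext l; simp [hc]
    rw [this]
    exact isOpen_lt continuous_const (esymmOn_continuous n k A)
  · have : {l : Fin n → ℝ | A.card = n - m + (k:ℕ) → 0 < esymmOn n l k A}
        = Set.univ := by
      ext l; simp [hc]
    rw [this]
    exact isOpen_univ

lemma closure_Rset (n m : ℕ) (hm : 1 ≤ m) (hmn : m ≤ n) (l : Fin n → ℝ)
    (hΩ : 0 < esymm n m l) (hcl : l ∈ closure (Rset n m)) : l ∈ Rset n m := by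
  have h1 : ∀ k ≤ m, ∀ A : Finset (Fin n), A.card = n - m + k → 0 ≤ esymmOn n l k A := by
    intro k hk A hA
    have hsub : Rset n m ⊆ {x | 0 ≤ esymmOn n x k A} :=
      fun x hx => le_of_lt ((mem_Rset.mp hx) k hk A hA)
    exact closure_minimal hsub
      (isClosed_le continuous_const (esymmOn_continuous n k A)) hcl
  have h0 : 0 < esymmOn n l m univ := hΩ
  exact mem_Rset.mpr (core n m hm hmn l h0 h1)

lemma one_mem_Rset (n m : ℕ) (hmn : m ≤ n) : (fun _ => (1:ℝ)) ∈ Rset n m := by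
  apply mem_Rset.mpr
  intro k hk A hA
  rw [esymmOn_one]
  have hkA : k ≤ A.card := by omega
  exact_mod_cast Nat.choose_pos hkA

lemma garding_subset_Rset (n m : ℕ) (hm : 1 ≤ m) (hmn : m ≤ n) :
    GardingCone n m ⊆ Rset n m := by
  unfold GardingCone
  have h1Ω : (fun _ => (1:ℝ)) ∈ {l : Fin n → ℝ | 0 < esymm n m l} := by
    have := mem_Rset.mp (one_mem_Rset n m hmn) m le_rfl univ
      (by rw [Finset.card_univ, Fintype.card_fin]; omega)
    exact this
  apply IsPreconnected.subset_left_of_subset_union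
    (isOpen_Rset n m) (isClosed_closure (s := Rset n m)).isOpen_compl
  · exact Disjoint.mono_left subset_closure disjoint_compl_right
  · intro x hx
    by_cases hcl : x ∈ closure (Rset n m)
    · have hΩx : 0 < esymm n m x :=
        connectedComponentIn_subset {l : Fin n → ℝ | 0 < esymm n m l} (fun _ => 1) hx
      exact Or.inl (closure_Rset n m hm hmn x hΩx hcl)
    · exact Or.inr hcl
  · exact ⟨fun _ => 1, mem_connectedComponentIn h1Ω, one_mem_Rset n m hmn⟩
  · exact isPreconnected_connectedComponentIn

theorem stmt3 (n m : ℕ) (hm : 1 ≤ m) (hmn : m ≤ n)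
    (l : Fin n → ℝ) (hl : l ∈ GardingCone n m) (i : Fin n) :
    0 < fderiv ℝ (esymm n m) l (Pi.single i 1) := by
  rw [fderiv_esymm n m hm l i]
  have hmem := garding_subset_Rset n m hm hmn hl
  apply mem_Rset.mp hmem (m - 1) (by omega) (univ.erase i)
  rw [Finset.card_erase_of_mem (Finset.mem_univ i), Finset.card_univ, Fintype.card_fin]
  omega
end
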